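/- Fix r₀ > 0 and s₁ ∈ (0,r₀). Let J_z : [0,r₀] → ℝ be continuous, define B_θ(r) = (1/r) ∫₀^r s J_z(s) ds for r ∈ (0,r₀] (B_θ(0)=0) and p'(r) = −B_θ(r) J_z(r). Let ρ : [0,r₀] → [0,∞) be continuous with ρ(r) > 0 for r ∈ [0,s₁], and suppose there is C₀ > 0 such that |p'(r)| ≤ C₀ ρ(r) for all r ∈ [s₁,r₀]. Then there exists a constant C > 0 such that for every continuous function ξ : [0,r₀] → ℝ: | ∫₀^{r₀} p'(r) ξ(r)² dr | ≤ C ∫₀^{r₀} ρ(r) ξ(r)² r dr. -/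

import Mathlib

open Set MeasureTheory

/-- core estimate of Proposition 5.1. If the pressure gradient is dominated
by the density near the boundary, `|p'| ≤ C₀ ρ` on `[s₁,r₀]`, and `ρ > 0` on `[0,s₁]`, then
`| ∫₀^{r₀} p' ξ² dr | ≤ C ∫₀^{r₀} ρ ξ² r dr` for all continuous `ξ`. -/
theorem zpinch_pressure_term_dominated
    (r₀ s₁ : ℝ) (hr₀ : 0 < r₀) (hs₁ : s₁ ∈ Ioo (0:ℝ) r₀)
    (Jz Bθ p' ρ : ℝ → ℝ)
    (hJc : ContinuousOn Jz (Icc (0:ℝ) r₀))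
    (hBθ0 : Bθ 0 = 0)
    (hBθ : ∀ r ∈ Ioc (0:ℝ) r₀, Bθ r = (1 / r) * ∫ s in (0:ℝ)..r, s * Jz s)
    (hp' : ∀ r ∈ Icc (0:ℝ) r₀, p' r = -(Bθ r * Jz r))
    (hρc : ContinuousOn ρ (Icc (0:ℝ) r₀))
    (hρnn : ∀ r ∈ Icc (0:ℝ) r₀, 0 ≤ ρ r)
    (hρpos : ∀ r ∈ Icc (0:ℝ) s₁, 0 < ρ r)
    (C₀ : ℝ) (hC₀ : 0 < C₀)
    (hdom : ∀ r ∈ Icc s₁ r₀, |p' r| ≤ C₀ * ρ r) :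
    ∃ C > 0, ∀ ξ : ℝ → ℝ, ContinuousOn ξ (Icc (0:ℝ) r₀) →
      |∫ r in (0:ℝ)..r₀, p' r * (ξ r) ^ 2| ≤
        C * ∫ r in (0:ℝ)..r₀, ρ r * (ξ r) ^ 2 * r := by
  obtain ⟨hs₁0, hs₁r₀⟩ := hs₁
  -- bound on Jz
  obtain ⟨M₀, hM₀⟩ := isCompact_Icc.exists_bound_of_continuousOn hJc
  set M : ℝ := max M₀ 0 with hMdef
  have hM : ∀ r ∈ Icc (0:ℝ) r₀, |Jz r| ≤ M := fun r hr =>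
    le_trans (hM₀ r hr) (le_max_left _ _)
  have hMnn : 0 ≤ M := le_max_right _ _
  -- positive lower bound of ρ on [0,s₁]
  have hsub : Icc (0:ℝ) s₁ ⊆ Icc (0:ℝ) r₀ := Icc_subset_Icc le_rfl hs₁r₀.le
  obtain ⟨a, ha, hamin⟩ := isCompact_Icc.exists_isMinOn (nonempty_Icc.2 hs₁0.le)
    (hρc.mono hsub)
  set m : ℝ := ρ a with hmdef
  have hm : 0 < m := hρpos a ha
  have hmle : ∀ r ∈ Icc (0:ℝ) s₁, m ≤ ρ r := fun r hr => hamin hr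
  -- bound on Bθ
  have hBb : ∀ r ∈ Ioc (0:ℝ) r₀, |Bθ r| ≤ M * r / 2 := by
    intro r hr
    have hr0 : 0 < r := hr.1
    have hsubr : Icc (0:ℝ) r ⊆ Icc (0:ℝ) r₀ := Icc_subset_Icc le_rfl hr.2
    have hint1 : IntervalIntegrable (fun s => |s * Jz s|) volume 0 r := by
      apply ContinuousOn.intervalIntegrable
      rw [uIcc_of_le hr0.le]
      exact ((continuousOn_id.mul (hJc.mono hsubr)).abs)
    have hint2 : IntervalIntegrable (fun s => M * s) volume 0 r :=
      (continuous_const.mul continuous_id).intervalIntegrable 0 r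
    have hIb : |∫ s in (0:ℝ)..r, s * Jz s| ≤ M * r ^ 2 / 2 := by
      have h1 : |∫ s in (0:ℝ)..r, s * Jz s| ≤ ∫ s in (0:ℝ)..r, |s * Jz s| :=
        intervalIntegral.abs_integral_le_integral_abs hr0.le
      have h2 : (∫ s in (0:ℝ)..r, |s * Jz s|) ≤ ∫ s in (0:ℝ)..r, M * s := by
        apply intervalIntegral.integral_mono_on hr0.le hint1 hint2
        intro s hs
        have hs' : s ∈ Icc (0:ℝ) r₀ := hsubr hs
        calc |s * Jz s| = s * |Jz s| := by rw [abs_mul, abs_of_nonneg hs.1]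
          _ ≤ s * M := mul_le_mul_of_nonneg_left (hM s hs') hs.1
          _ = M * s := mul_comm _ _
      have h3 : (∫ s in (0:ℝ)..r, M * s) = M * r ^ 2 / 2 := by
        rw [intervalIntegral.integral_const_mul, integral_id]
        ring
      linarith
    rw [hBθ r hr, abs_mul, abs_of_pos (by positivity : (0:ℝ) < 1 / r)]
    calc 1 / r * |∫ s in (0:ℝ)..r, s * Jz s| ≤ 1 / r * (M * r ^ 2 / 2) := by
          apply mul_le_mul_of_nonneg_left hIb (by positivity)
      _ = M * r / 2 := by field_simp
  -- the constant
  set C : ℝ := C₀ / s₁ + M ^ 2 / (2 * m) + 1 with hCdef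
  have hCpos : 0 < C := by positivity
  refine ⟨C, hCpos, fun ξ hξc => ?_⟩
  -- pointwise bound on Ioc
  have hpt : ∀ r ∈ Ioc (0:ℝ) r₀,
      |p' r * ξ r ^ 2| ≤ C * (ρ r * ξ r ^ 2 * r) := by
    intro r hr
    have hr' : r ∈ Icc (0:ℝ) r₀ := ⟨hr.1.le, hr.2⟩
    have hξnn : (0:ℝ) ≤ ξ r ^ 2 := sq_nonneg _
    have hρr : 0 ≤ ρ r := hρnn r hr'
    have hbase : |p' r| ≤ (C₀ / s₁ + M ^ 2 / (2 * m)) * (ρ r * r) := by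
      rcases le_or_gt r s₁ with hle | hgt
      · -- near axis
        have h1 : |p' r| ≤ M ^ 2 * r / 2 := by
          rw [hp' r hr', abs_neg, abs_mul]
          calc |Bθ r| * |Jz r| ≤ (M * r / 2) * M :=
              mul_le_mul (hBb r hr) (hM r hr') (abs_nonneg _)
                (div_nonneg (mul_nonneg hMnn hr.1.le) two_pos.le)
            _ = M ^ 2 * r / 2 := by ring
        have h2 : m ≤ ρ r := hmle r ⟨hr.1.le, hle⟩
        have h3 : M ^ 2 * r / 2 ≤ M ^ 2 / (2 * m) * (ρ r * r) := by
          rw [div_mul_eq_mul_div, le_div_iff₀ (by positivity)]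
          have : M ^ 2 * r * m ≤ M ^ 2 * r * ρ r :=
            mul_le_mul_of_nonneg_left h2 (mul_nonneg (sq_nonneg M) hr.1.le)
          nlinarith
        have h4 : 0 ≤ C₀ / s₁ * (ρ r * r) :=
          mul_nonneg (div_nonneg hC₀.le hs₁0.le) (mul_nonneg hρr hr.1.le)
        nlinarith
      · -- outer region
        have h1 : |p' r| ≤ C₀ * ρ r := hdom r ⟨hgt.le, hr.2⟩
        have h2 : C₀ * ρ r ≤ C₀ / s₁ * (ρ r * r) := by
          rw [div_mul_eq_mul_div, le_div_iff₀ hs₁0]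
          have : C₀ * ρ r * s₁ ≤ C₀ * ρ r * r :=
            mul_le_mul_of_nonneg_left hgt.le (mul_nonneg hC₀.le hρr)
          nlinarith
        have h4 : 0 ≤ M ^ 2 / (2 * m) * (ρ r * r) :=
          mul_nonneg (div_nonneg (sq_nonneg M) (by positivity)) (mul_nonneg hρr hr.1.le)
        nlinarith
    have hfinal : (C₀ / s₁ + M ^ 2 / (2 * m)) * (ρ r * r) ≤ C * (ρ r * r) := by
      apply mul_le_mul_of_nonneg_right _ (mul_nonneg hρr hr.1.le)
      rw [hCdef]; linarith
    calc |p' r * ξ r ^ 2| = |p' r| * ξ r ^ 2 := by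
          rw [abs_mul, abs_of_nonneg hξnn]
      _ ≤ C * (ρ r * r) * ξ r ^ 2 :=
          mul_le_mul_of_nonneg_right (hbase.trans hfinal) hξnn
      _ = C * (ρ r * ξ r ^ 2 * r) := by ring
  -- integrability of the majorant
  have hgc : ContinuousOn (fun r => C * (ρ r * ξ r ^ 2 * r)) (Icc (0:ℝ) r₀) :=
    continuousOn_const.mul ((hρc.mul (hξc.pow 2)).mul continuousOn_id)
  have hgint : IntervalIntegrable (fun r => C * (ρ r * ξ r ^ 2 * r)) volume 0 r₀ := by
    apply ContinuousOn.intervalIntegrable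
    rwa [uIcc_of_le hr₀.le]
  have hbound : ‖∫ r in (0:ℝ)..r₀, p' r * ξ r ^ 2‖ ≤
      |∫ r in (0:ℝ)..r₀, C * (ρ r * ξ r ^ 2 * r)| := by
    apply intervalIntegral.norm_integral_le_abs_of_norm_le _ hgint
    rw [uIoc_of_le hr₀.le]
    filter_upwards [ae_restrict_mem measurableSet_Ioc] with t ht
    simpa only [Real.norm_eq_abs] using hpt t ht
  have hgnn : (0:ℝ) ≤ ∫ r in (0:ℝ)..r₀, ρ r * ξ r ^ 2 * r := by
    apply intervalIntegral.integral_nonneg hr₀.le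
    intro u hu
    have := hρnn u hu
    have hu0 := hu.1
    positivity
  rw [Real.norm_eq_abs] at hbound
  calc |∫ r in (0:ℝ)..r₀, p' r * (ξ r) ^ 2|
      ≤ |∫ r in (0:ℝ)..r₀, C * (ρ r * ξ r ^ 2 * r)| := hbound
    _ = C * ∫ r in (0:ℝ)..r₀, ρ r * (ξ r) ^ 2 * r := by
        rw [intervalIntegral.integral_const_mul, abs_of_nonneg (by positivity)]
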